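/- Let 0 < α ≤ 1, R > 0, and x₀ ∈ ℝ^d with d ≥ 2. The ball B_R(x₀) satisfies the condition II_{∂Ω} ≥ (1-α)(x·ν)/|x|² at every boundary point (where II_{∂B_R(x₀)} = (1/R)·g_E and ν(x) = (x - x₀)/R) if and only if |x₀| ≤ αR or |x₀| > R. Concretely: for all ω ∈ S^{d-1}, writing x = x₀ + Rω, one has 1/R ≥ (1-α)(x·ω)/|x|², if and only if |x₀| ≤ αR or |x₀| > R. -/

import Mathlib

lemma stmt0_aux {d : ℕ} (x₀ ω : EuclideanSpace ℝ (Fin d)) (hω : ‖ω‖ = 1) (R : ℝ) :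
    (inner ℝ (x₀ + R • ω) ω : ℝ) = inner ℝ x₀ ω + R ∧
    ‖x₀ + R • ω‖ ^ 2 = ‖x₀‖ ^ 2 + 2 * R * (inner ℝ x₀ ω : ℝ) + R ^ 2 := by
  constructor
  · rw [inner_add_left, real_inner_smul_left, real_inner_self_eq_norm_sq, hω]
    ring
  · rw [norm_add_sq_real, real_inner_smul_right, norm_smul, Real.norm_eq_abs]
    rw [hω]
    rw [mul_pow, sq_abs]
    ring

/-- the ball `B_R(x₀)` satisfies the geometric condition
`II ≥ (1-α)(x·ν)/|x|²` (with `II = (1/R) g_E`, `ν(x) = (x-x₀)/R`) iff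
`‖x₀‖ ≤ αR` or `‖x₀‖ > R`. -/
theorem stmt0 (d : ℕ) (hd : 2 ≤ d) (α R : ℝ) (hα0 : 0 < α) (hα1 : α ≤ 1) (hR : 0 < R)
    (x₀ : EuclideanSpace ℝ (Fin d)) (hx₀ : ‖x₀‖ ≠ R) :
    (∀ ω : EuclideanSpace ℝ (Fin d), ‖ω‖ = 1 →
      (1 - α) * (inner ℝ (x₀ + R • ω) ω : ℝ) / ‖x₀ + R • ω‖ ^ 2 ≤ 1 / R)
    ↔ (‖x₀‖ ≤ α * R ∨ R < ‖x₀‖) := by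
  set n := ‖x₀‖ with hn
  have hn0 : 0 ≤ n := norm_nonneg _
  constructor
  · intro h
    by_cases hx : x₀ = 0
    · left
      rw [hn, hx, norm_zero]
      positivity
    · have hnpos : 0 < n := norm_pos_iff.mpr hx
      set ω : EuclideanSpace ℝ (Fin d) := -(n⁻¹ • x₀) with hωdef
      have hω : ‖ω‖ = 1 := by
        rw [hωdef, norm_neg, norm_smul, Real.norm_eq_abs,
          abs_of_pos (inv_pos.mpr hnpos), ← hn]
        field_simp
      have hinner : (inner ℝ x₀ ω : ℝ) = -n := by
        rw [hωdef, inner_neg_right, real_inner_smul_right, real_inner_self_eq_norm_sq, ← hn]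
        field_simp
      have key := h ω hω
      obtain ⟨h1, h2⟩ := stmt0_aux x₀ ω hω R
      rw [h1, h2, hinner] at key
      by_contra hc
      push_neg at hc
      obtain ⟨hc1, hc2⟩ := hc
      have hnR : n < R := lt_of_le_of_ne hc2 hx₀
      have hD : (0:ℝ) < n ^ 2 + 2 * R * (-n) + R ^ 2 := by nlinarith
      rw [div_le_div_iff₀ hD hR] at key
      nlinarith [mul_pos (sub_pos.mpr hnR) (sub_pos.mpr hc1)]
  · intro h ω hω
    obtain ⟨h1, h2⟩ := stmt0_aux x₀ ω hω R
    rw [h1, h2]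
    set t : ℝ := inner ℝ x₀ ω with htdef
    have ht : |t| ≤ n := by
      have := abs_real_inner_le_norm x₀ ω
      rwa [hω, mul_one] at this
    have ht' : -n ≤ t := neg_le_of_abs_le ht
    have hne : n - R ≠ 0 := sub_ne_zero.mpr hx₀
    have hsq : (0:ℝ) < (n - R) ^ 2 := by positivity
    have hD : (0:ℝ) < n ^ 2 + 2 * R * t + R ^ 2 := by nlinarith
    rw [div_le_div_iff₀ hD hR]
    have hprod : 0 ≤ (n - R) * (n - α * R) := by
      rcases h with h | h
      · nlinarith [mul_nonneg (show (0:ℝ) ≤ R - n by nlinarith)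
          (show (0:ℝ) ≤ α * R - n by linarith)]
      · exact mul_nonneg (by linarith) (by nlinarith)
    nlinarith [mul_nonneg (by linarith : (0:ℝ) ≤ 1 + α)
      (mul_nonneg hR.le (by linarith : (0:ℝ) ≤ t + n))]
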